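/- Let b and N be coprime positive integers with 1 ≤ b < N, and let Γ₂(b,N) = {m₁·(1,b) + m₂·(0,N) : m₁,m₂ ∈ ℤ} ⊆ ℝ² be the two-dimensional lattice generated by (1,b) and (0,N), with |Γ₂(b,N)| = {(|x|,|y|) : (x,y) ∈ Γ₂(b,N)} \ {(0,0)}. Then for every integer k with 1 ≤ k ≤ N/2, the point (k, k, |kb|_N) is a Voronoi relative minimum of |Γ(1,b,N)| if and only if the point (k, |kb|_N) is a Voronoi relative minimum of |Γ₂(b,N)|. -/
import Mathlib


/-- The box `Π(A)` spanned by a (finite nonempty) set `A ⊆ ℝⁿ_{≥0}`: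
all points with nonnegative coordinates bounded by the coordinatewise maxima of `A`. -/
def box {n : ℕ} (A : Set (Fin n → ℝ)) : Set (Fin n → ℝ) :=
  {x | ∀ i, 0 ≤ x i ∧ x i ≤ sSup ((fun p => p i) '' A)}

/-- The set of Voronoi relative minima of `S`: points `g ∈ S` such that the box
`Π({g})` contains no point of `S \ {g}`. -/
def vrm {n : ℕ} (S : Set (Fin n → ℝ)) : Set (Fin n → ℝ) :=
  {g | g ∈ S ∧ ∀ p ∈ S, p ≠ g → p ∉ box {g}}

/-- A nonempty finite subset `F ⊆ vrm S` is minimal if the box `Π(F)` contains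
no point of `vrm S \ F`. -/
def IsMinimal {n : ℕ} (S F : Set (Fin n → ℝ)) : Prop :=
  F.Nonempty ∧ F.Finite ∧ F ⊆ vrm S ∧ ∀ p ∈ vrm S, p ∉ F → p ∉ box F

/-- `p` is a point on the `j`-th coordinate axis, different from the origin. -/
def OnAxis (j : Fin 3) (p : Fin 3 → ℝ) : Prop :=
  p ≠ 0 ∧ ∀ k, k ≠ j → p k = 0

/-- `S ⊆ ℝ³` is axial if it contains a point on each of the three coordinate axes. -/
def Axial (S : Set (Fin 3 → ℝ)) : Prop :=
  ∀ j : Fin 3, ∃ p ∈ S, ∀ k, k ≠ j → p k = 0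

/-- A finite axial set `S ⊆ ℝ³_{≥0}` is in general position if (i) each coordinate
plane contains exactly two points of `S`, neither at the origin, lying on the two
coordinate axes contained in that plane, and (ii) every other plane parallel to a
coordinate plane contains at most one point of `S`. -/
def GeneralPosition (S : Set (Fin 3 → ℝ)) : Prop :=
  (∀ i : Fin 3, ∃ p q : Fin 3 → ℝ, p ≠ q ∧ {r | r ∈ S ∧ r i = 0} = {p, q} ∧
    ∃ j k : Fin 3, j ≠ i ∧ k ≠ i ∧ j ≠ k ∧ OnAxis j p ∧ OnAxis k q) ∧
  (∀ i : Fin 3, ∀ c : ℝ, c ≠ 0 → {r | r ∈ S ∧ r i = c}.Subsingleton)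

/-- The rank-1 lattice `Γ(a,b,N) = {m₁·(1,a,b) + m₂·(0,N,0) + m₃·(0,0,N)} ⊆ ℝ³`. -/
def Gamma (a b N : ℤ) : Set (Fin 3 → ℝ) :=
  {p | ∃ m₁ m₂ m₃ : ℤ,
    p = ![(m₁ : ℝ), (m₁ : ℝ) * a + (m₂ : ℝ) * N, (m₁ : ℝ) * b + (m₃ : ℝ) * N]}

/-- `|Γ| = {(|x₁|,…,|xₙ|) : x ∈ Γ} \ {0}`. -/
def absSet {n : ℕ} (L : Set (Fin n → ℝ)) : Set (Fin n → ℝ) :=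
  {q | (∃ p ∈ L, ∀ i, q i = |p i|) ∧ q ≠ 0}

/-- `|x|_N = min(x mod N, (−x) mod N)`, the distance from `x` to the nearest
multiple of `N`. -/
def distN (N x : ℤ) : ℤ := min (x % N) ((-x) % N)

/-- The two-dimensional lattice `Γ₂(b,N) = {m₁·(1,b) + m₂·(0,N)} ⊆ ℝ²`. -/
def Gamma2 (b N : ℤ) : Set (Fin 2 → ℝ) :=
  {p | ∃ m₁ m₂ : ℤ, p = ![(m₁ : ℝ), (m₁ : ℝ) * b + (m₂ : ℝ) * N]}

lemma mem_box_singleton {n : ℕ} (g x : Fin n → ℝ) :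
    x ∈ box {g} ↔ ∀ i, 0 ≤ x i ∧ x i ≤ g i := by
  simp [box]

lemma distN_nonneg (N x : ℤ) (hN : 0 < N) : 0 ≤ distN N x :=
  le_min (Int.emod_nonneg _ (by omega)) (Int.emod_nonneg _ (by omega))

lemma distN_exists (N x : ℤ) (hN : 0 < N) : ∃ m : ℤ, |x + m * N| = distN N x := by
  by_cases h : x % N ≤ (-x) % N
  · refine ⟨-(x / N), ?_⟩
    have h1 : x + -(x / N) * N = x % N := by rw [Int.emod_def]; ring
    rw [h1, distN, min_eq_left h, abs_of_nonneg (Int.emod_nonneg _ (by omega))]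
  · refine ⟨(-x) / N, ?_⟩
    have h1 : x + ((-x) / N) * N = -((-x) % N) := by rw [Int.emod_def]; ring
    rw [h1, distN, min_eq_right (le_of_not_ge h), abs_neg,
      abs_of_nonneg (Int.emod_nonneg _ (by omega))]

lemma key_abs (N k m₁ m₂ : ℤ) (hN : 0 < N) (hk2 : 2 * k ≤ N) (h1 : |m₁| ≤ k)
    (h2 : |m₁ + m₂ * N| ≤ k) : |m₁ + m₂ * N| = |m₁| := by
  rcases eq_or_ne m₂ 0 with rfl | h
  · simp
  · have hN' : N ≤ |m₂ * N| := by
      rw [abs_mul, abs_of_nonneg (by omega : (0:ℤ) ≤ N)]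
      exact le_mul_of_one_le_left (by omega) (Int.one_le_abs h)
    have heq : m₂ * N = (m₁ + m₂ * N) - m₁ := by ring
    rw [heq] at hN'
    simp only [Int.abs_eq_natAbs] at *
    omega

/-- Let `b, N` be coprime positive integers with `1 ≤ b < N`. Then for every
integer `1 ≤ k ≤ N/2`, the point `(k, k, |kb|_N)` is a Voronoi relative minimum
of `|Γ(1,b,N)|` iff `(k, |kb|_N)` is a Voronoi relative minimum of `|Γ₂(b,N)|`. -/
theorem vrm_dim3_iff_vrm_dim2
    (b N : ℤ) (hb : 1 ≤ b) (hbN : b < N) (hcop : Int.gcd b N = 1)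
    (k : ℤ) (hk : 1 ≤ k) (hk2 : 2 * k ≤ N) :
    ![(k : ℝ), (k : ℝ), (distN N (k * b) : ℝ)] ∈ vrm (absSet (Gamma 1 b N)) ↔
      ![(k : ℝ), (distN N (k * b) : ℝ)] ∈ vrm (absSet (Gamma2 b N)) := by
  have hN : 0 < N := by omega
  obtain ⟨m, hm⟩ := distN_exists N (k * b) hN
  set d : ℤ := distN N (k * b) with hd
  have hkR : |(k : ℝ)| = (k : ℝ) := abs_of_pos (by exact_mod_cast hk)
  -- membership of the 3D point
  have mem3 : ![(k : ℝ), (k : ℝ), (d : ℝ)] ∈ absSet (Gamma 1 b N) := by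
    refine ⟨⟨![(k : ℝ), (k : ℝ) * ((1:ℤ):ℝ) + ((0:ℤ) : ℝ) * N,
        (k : ℝ) * b + (m : ℝ) * N], ⟨k, 0, m, rfl⟩, ?_⟩, ?_⟩
    · intro i
      fin_cases i
      · simpa using hkR.symm
      · show (k : ℝ) = |(k : ℝ) * ((1:ℤ):ℝ) + ((0:ℤ):ℝ) * (N:ℝ)|
        norm_num [hkR]
      · show (d : ℝ) = |(k : ℝ) * b + (m : ℝ) * N|
        rw [← hm]; push_cast; ring_nf
    · intro h0
      have := congrFun h0 0
      simp at this
      omega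
  -- membership of the 2D point
  have mem2 : ![(k : ℝ), (d : ℝ)] ∈ absSet (Gamma2 b N) := by
    refine ⟨⟨![(k : ℝ), (k : ℝ) * b + (m : ℝ) * N], ⟨k, m, rfl⟩, ?_⟩, ?_⟩
    · intro i
      fin_cases i
      · simpa using hkR.symm
      · show (d : ℝ) = |(k : ℝ) * b + (m : ℝ) * N|
        rw [← hm]; push_cast; ring_nf
    · intro h0
      have := congrFun h0 0
      simp at this
      omega
  constructor
  · rintro ⟨-, H⟩
    refine ⟨mem2, ?_⟩
    rintro p ⟨⟨q, ⟨m₁, m₂, rfl⟩, habs⟩, hp0⟩ hne hbox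
    rw [mem_box_singleton] at hbox
    have ha0 : p 0 = |(m₁ : ℝ)| := by simpa using habs 0
    have ha1 : p 1 = |(m₁ : ℝ) * b + (m₂ : ℝ) * N| := by simpa using habs 1
    set p3 : Fin 3 → ℝ := ![p 0, p 0, p 1] with hp3
    have mem3' : p3 ∈ absSet (Gamma 1 b N) := by
      refine ⟨⟨![(m₁ : ℝ), (m₁ : ℝ) * ((1:ℤ):ℝ) + ((0:ℤ) : ℝ) * N,
          (m₁ : ℝ) * b + (m₂ : ℝ) * N], ⟨m₁, 0, m₂, rfl⟩, ?_⟩, ?_⟩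
      · intro i
        fin_cases i
        · simpa [hp3] using ha0
        · simp [hp3, ha0]
        · simpa [hp3] using ha1
      · intro h0
        apply hp0
        funext i
        fin_cases i
        · simpa [hp3] using congrFun h0 0
        · simpa [hp3] using congrFun h0 2
    have box3 : p3 ∈ box {![(k : ℝ), (k : ℝ), (d : ℝ)]} := by
      rw [mem_box_singleton]
      intro i
      fin_cases i
      · simpa [hp3] using hbox 0
      · simpa [hp3] using hbox 0
      · simpa [hp3] using hbox 1
    have ne3 : p3 ≠ ![(k : ℝ), (k : ℝ), (d : ℝ)] := by
      intro h0
      apply hne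
      funext i
      fin_cases i
      · simpa [hp3] using congrFun h0 0
      · simpa [hp3] using congrFun h0 2
    exact H p3 mem3' ne3 box3
  · rintro ⟨-, H⟩
    refine ⟨mem3, ?_⟩
    rintro p ⟨⟨q, ⟨m₁, m₂, m₃, rfl⟩, habs⟩, hp0⟩ hne hbox
    rw [mem_box_singleton] at hbox
    have ha0 : p 0 = |(m₁ : ℝ)| := by simpa using habs 0
    have ha1 : p 1 = |(m₁ : ℝ) * ((1:ℤ):ℝ) + (m₂ : ℝ) * N| := by simpa using habs 1
    have ha2 : p 2 = |(m₁ : ℝ) * b + (m₃ : ℝ) * N| := by simpa using habs 2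
    have ha1' : p 1 = |((m₁ + m₂ * N : ℤ) : ℝ)| := by rw [ha1]; push_cast; ring_nf
    -- integer bounds
    have hb0 : |m₁| ≤ k := by
      have := (hbox 0).2
      rw [ha0] at this
      simp at this
      exact_mod_cast this
    have hb1 : |m₁ + m₂ * N| ≤ k := by
      have := (hbox 1).2
      rw [ha1'] at this
      simp at this
      exact_mod_cast this
    have hkey : |m₁ + m₂ * N| = |m₁| := key_abs N k m₁ m₂ hN hk2 hb0 hb1
    have hp10 : p 1 = p 0 := by
      rw [ha1', ha0, ← Int.cast_abs, ← Int.cast_abs, hkey]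
    set p2 : Fin 2 → ℝ := ![p 0, p 2] with hp2
    have mem2' : p2 ∈ absSet (Gamma2 b N) := by
      refine ⟨⟨![(m₁ : ℝ), (m₁ : ℝ) * b + (m₃ : ℝ) * N], ⟨m₁, m₃, rfl⟩, ?_⟩, ?_⟩
      · intro i
        fin_cases i
        · simpa [hp2] using ha0
        · simpa [hp2] using ha2
      · intro h0
        apply hp0
        funext i
        have e0 : p 0 = 0 := by simpa [hp2] using congrFun h0 0
        have e2 : p 2 = 0 := by simpa [hp2] using congrFun h0 1
        fin_cases i
        · exact e0
        · show p 1 = 0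
          rw [hp10, e0]
        · exact e2
    have box2 : p2 ∈ box {![(k : ℝ), (d : ℝ)]} := by
      rw [mem_box_singleton]
      intro i
      fin_cases i
      · simpa [hp2] using hbox 0
      · simpa [hp2] using hbox 2
    have ne2 : p2 ≠ ![(k : ℝ), (d : ℝ)] := by
      intro h0
      apply hne
      funext i
      have e0 : p 0 = (k : ℝ) := by simpa [hp2] using congrFun h0 0
      have e2 : p 2 = (d : ℝ) := by simpa [hp2] using congrFun h0 1
      fin_cases i
      · exact e0
      · show p 1 = (k : ℝ)
        rw [hp10, e0]
      · exact e2
    exact H p2 mem2' ne2 box2
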